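/- Let A be a line arrangement in ℝ² with |A| = n lines, maximal multiplicity m(A) and maximal number of parallel lines p(A), and set ν_f(A) = min{n − m(A) + 1, n − p(A)}. If 0 < d < ν_f(A), then every polynomial vector field χ of degree exactly d (i.e., max(deg P, deg Q) = d) that fixes every line of A has only a finite set of invariant lines (i.e., D_d(A) = D_d^f(A)). -/

import Mathlib

open MvPolynomial

/-- Evaluation of a bivariate polynomial at a point of `ℝ × ℝ`
(the variable `X 0` is `x`, the variable `X 1` is `y`). -/
noncomputable def pev (P : MvPolynomial (Fin 2) ℝ) (q : ℝ × ℝ) : ℝ :=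
  MvPolynomial.eval ![q.1, q.2] P

/-- The line `{(x, y) | a * x + b * y + c = 0}`. -/
def lineSet (a b c : ℝ) : Set (ℝ × ℝ) := {q : ℝ × ℝ | a * q.1 + b * q.2 + c = 0}

/-- A subset of `ℝ²` is a line if it is the zero set of an affine form
`a * x + b * y + c` with `(a, b) ≠ (0, 0)`. -/
def IsLine (L : Set (ℝ × ℝ)) : Prop :=
  ∃ a b c : ℝ, (a, b) ≠ (0, 0) ∧ L = lineSet a b c

/-- The line `L` is invariant by the polynomial vector field `χ = P ∂x + Q ∂y`:
for a defining affine form `a * x + b * y + c` of `L`, the polynomial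
`a * P + b * Q` vanishes at every point of `L`. -/
def InvLine (P Q : MvPolynomial (Fin 2) ℝ) (L : Set (ℝ × ℝ)) : Prop :=
  ∃ a b c : ℝ, (a, b) ≠ (0, 0) ∧ L = lineSet a b c ∧
    ∀ q ∈ L, a * pev P q + b * pev Q q = 0

open scoped Classical in
/-- The number of lines of the arrangement `A` passing through the point `q`. -/
noncomputable def numThrough (A : Finset (Set (ℝ × ℝ))) (q : ℝ × ℝ) : ℕ :=
  (A.filter (fun L => q ∈ L)).card

/-- `mArr A` is the maximal number of lines of `A` passing through a common point. -/
noncomputable def mArr (A : Finset (Set (ℝ × ℝ))) : ℕ :=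
  sSup (Set.range (numThrough A))

/-- Two lines are parallel if they are equal or disjoint. -/
def ParLines (L L' : Set (ℝ × ℝ)) : Prop := L = L' ∨ L ∩ L' = ∅

/-- `pArr A` is the maximal number of pairwise parallel lines in `A`. -/
noncomputable def pArr (A : Finset (Set (ℝ × ℝ))) : ℕ :=
  sSup {k : ℕ | ∃ S : Finset (Set (ℝ × ℝ)), S ⊆ A ∧
    (∀ L ∈ S, ∀ L' ∈ S, ParLines L L') ∧ S.card = k}

noncomputable def form (a b c : ℝ) : MvPolynomial (Fin 2) ℝ :=
  C a * X 0 + C b * X 1 + C c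

lemma pev_form (a b c : ℝ) (q : ℝ × ℝ) : pev (form a b c) q = a * q.1 + b * q.2 + c := by
  simp [pev, form]

lemma mem_lineSet {a b c : ℝ} {q : ℝ × ℝ} : q ∈ lineSet a b c ↔ a * q.1 + b * q.2 + c = 0 :=
  Iff.rfl

lemma pos_of_ne {a b : ℝ} (h : (a, b) ≠ (0, 0)) : 0 < a ^ 2 + b ^ 2 := by
  rcases eq_or_ne a 0 with rfl | ha
  · rcases eq_or_ne b 0 with rfl | hb
    · simp at h
    · positivity
  · positivity

lemma norm_ne {a b : ℝ} (h : a ^ 2 + b ^ 2 = 1) : (a, b) ≠ (0, 0) := by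
  intro hc
  rw [Prod.mk.injEq] at hc
  obtain ⟨rfl, rfl⟩ := hc
  norm_num at h

lemma lineSet_smul {a b c t : ℝ} (ht : t ≠ 0) :
    lineSet (t * a) (t * b) (t * c) = lineSet a b c := by
  ext q
  simp only [lineSet, Set.mem_setOf_eq]
  constructor
  · intro h
    have : t * (a * q.1 + b * q.2 + c) = 0 := by linarith [h]
    rcases mul_eq_zero.mp this with h' | h'
    · exact absurd h' ht
    · exact h'
  · intro h
    have : t * (a * q.1 + b * q.2 + c) = t * 0 := by rw [h]
    nlinarith [this]

lemma prop_of_det_zero {α β a b : ℝ} (h1 : (α, β) ≠ (0, 0)) (h2 : (a, b) ≠ (0, 0))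
    (hdet : α * b - a * β = 0) : ∃ t : ℝ, t ≠ 0 ∧ a = t * α ∧ b = t * β := by
  rcases eq_or_ne α 0 with rfl | hα
  · have hβ : β ≠ 0 := by
      intro hb; exact h1 (by simp [hb])
    have ha : a = 0 := by
      have h0 : a * β = 0 := by linarith [hdet]
      rcases mul_eq_zero.mp h0 with h | h
      · exact h
      · exact absurd h hβ
    refine ⟨b / β, ?_, by simp [ha], by field_simp⟩
    intro hb0
    have : b = 0 := by field_simp at hb0; simpa using hb0
    exact h2 (by simp [ha, this])
  · refine ⟨a / α, ?_, by field_simp, ?_⟩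
    · intro ha0
      have ha : a = 0 := by field_simp at ha0; simpa using ha0
      have hb : b = 0 := by
        have : α * b = 0 := by rw [ha] at hdet; linarith
        rcases mul_eq_zero.mp this with h | h
        · exact absurd h hα
        · exact h
      exact h2 (by simp [ha, hb])
    · field_simp
      nlinarith [hdet]

lemma exists_mem_inter {a b c a' b' c' : ℝ} (h : a * b' - a' * b ≠ 0) :
    ∃ q, q ∈ lineSet a b c ∧ q ∈ lineSet a' b' c' := by
  refine ⟨⟨(-c * b' + c' * b) / (a * b' - a' * b), (-a * c' + a' * c) / (a * b' - a' * b)⟩, ?_, ?_⟩ <;>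
    · rw [mem_lineSet]
      simp only []
      rw [mul_div_assoc', mul_div_assoc', ← add_div, div_add' _ _ _ h, div_eq_zero_iff]
      left
      ring

lemma parLines_same_normal {a b γ γ' : ℝ} :
    lineSet a b γ = lineSet a b γ' ∨ lineSet a b γ ∩ lineSet a b γ' = ∅ := by
  rcases eq_or_ne γ γ' with rfl | hne
  · exact Or.inl rfl
  · right
    ext q
    simp only [Set.mem_inter_iff, Set.mem_empty_iff_false, iff_false, not_and]
    intro h1 h2
    rw [mem_lineSet] at h1 h2
    exact hne (by linarith)

lemma two_points (a b c : ℝ) (h : a ^ 2 + b ^ 2 = 1) :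
    ((-c * a, -c * b) : ℝ × ℝ) ∈ lineSet a b c ∧
      ((-c * a - b, -c * b + a) : ℝ × ℝ) ∈ lineSet a b c := by
  constructor <;> · rw [mem_lineSet]; simp only []; linear_combination (-c) * h

lemma det_zero_of_parLines {a b c a' b' c' : ℝ} (h : a ^ 2 + b ^ 2 = 1)
    (h' : (a', b') ≠ (0, 0))
    (hp : lineSet a b c = lineSet a' b' c' ∨ lineSet a b c ∩ lineSet a' b' c' = ∅) :
    a' * b - a * b' = 0 := by
  rcases hp with heq | hdisj
  · obtain ⟨hq1, hq2⟩ := two_points a b c h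
    rw [heq, mem_lineSet] at hq1 hq2
    simp only [] at hq1 hq2
    linear_combination hq1 - hq2
  · by_contra hdet
    have hdet' : a' * b - a * b' ≠ 0 := hdet
    obtain ⟨q, hq1, hq2⟩ := exists_mem_inter hdet'
    have : q ∈ lineSet a b c ∩ lineSet a' b' c' := ⟨hq2, hq1⟩
    simp [hdisj] at this

abbrev MvP2 : Type := MvPolynomial (Fin 2) ℝ

lemma eval_aeval' (x : Fin 2 → ℝ) (g : Fin 2 → MvP2) (p : MvP2) :
    eval x (aeval g p) = eval (fun i => eval x (g i)) p := by
  rw [aeval_def, eval₂_comp_left (eval x)]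
  have h : (eval x).comp (algebraMap ℝ MvP2) = RingHom.id ℝ := by
    ext r; simp [MvPolynomial.algebraMap_eq]
  rw [h]
  rfl

lemma peval_aeval' (v : ℝ) (g : Fin 2 → Polynomial ℝ) (p : MvP2) :
    Polynomial.eval v (aeval g p) = eval (fun i => Polynomial.eval v (g i)) p := by
  show (Polynomial.evalRingHom v) (aeval g p) = _
  rw [aeval_def, eval₂_comp_left (Polynomial.evalRingHom v)]
  have h : (Polynomial.evalRingHom v).comp (algebraMap ℝ (Polynomial ℝ)) = RingHom.id ℝ := by
    ext r; simp
  rw [h]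
  rfl

noncomputable def sig (a b c : ℝ) : MvP2 →ₐ[ℝ] MvP2 :=
  aeval ![C a * X 0 + C b * X 1 + C c, C (-b) * X 0 + C a * X 1]

noncomputable def tau (a b c : ℝ) : MvP2 →ₐ[ℝ] MvP2 :=
  aeval ![C a * X 0 - C b * X 1 - C (a * c), C b * X 0 + C a * X 1 - C (b * c)]

lemma circ_C {a b : ℝ} (h : a ^ 2 + b ^ 2 = 1) : (C a : MvP2) ^ 2 + (C b) ^ 2 = 1 := by
  rw [← map_pow, ← map_pow, ← map_add, h, map_one]

lemma tau_comp_sig {a b c : ℝ} (h : a ^ 2 + b ^ 2 = 1) :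
    (tau a b c).comp (sig a b c) = AlgHom.id ℝ MvP2 := by
  have e := circ_C h
  apply MvPolynomial.algHom_ext
  intro i
  fin_cases i
  · simp [AlgHom.comp_apply, sig, tau, algebraMap_eq, Fin.mk_zero, Fin.mk_one]
    linear_combination (X (0 : Fin 2) - C c) * e
  · simp [AlgHom.comp_apply, sig, tau, algebraMap_eq, Fin.mk_zero, Fin.mk_one]
    linear_combination (X (1 : Fin 2)) * e

lemma sig_comp_tau {a b c : ℝ} (h : a ^ 2 + b ^ 2 = 1) :
    (sig a b c).comp (tau a b c) = AlgHom.id ℝ MvP2 := by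
  have e := circ_C h
  apply MvPolynomial.algHom_ext
  intro i
  fin_cases i
  · simp [AlgHom.comp_apply, sig, tau, algebraMap_eq, Fin.mk_zero, Fin.mk_one]
    linear_combination (X (0 : Fin 2)) * e
  · simp [AlgHom.comp_apply, sig, tau, algebraMap_eq, Fin.mk_zero, Fin.mk_one]
    linear_combination (X (1 : Fin 2)) * e

noncomputable def lineEquiv (a b c : ℝ) (h : a ^ 2 + b ^ 2 = 1) : MvP2 ≃ₐ[ℝ] MvP2 :=
  AlgEquiv.ofAlgHom (sig a b c) (tau a b c) (sig_comp_tau h) (tau_comp_sig h)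

lemma lineEquiv_apply (a b c : ℝ) (h : a ^ 2 + b ^ 2 = 1) (p : MvP2) :
    lineEquiv a b c h p = sig a b c p := rfl

lemma lineEquiv_symm_apply (a b c : ℝ) (h : a ^ 2 + b ^ 2 = 1) (p : MvP2) :
    (lineEquiv a b c h).symm p = tau a b c p := rfl

lemma sig_X0 (a b c : ℝ) : sig a b c (X 0) = form a b c := by
  simp [sig, form]

noncomputable def Zmap : MvP2 →ₐ[ℝ] MvP2 := aeval ![0, X 1]

lemma X0_dvd_sub (p : MvP2) : (X 0 : MvP2) ∣ p - Zmap p := by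
  induction p using MvPolynomial.induction_on with
  | C r => simp [Zmap, algebraMap_eq]
  | add p q hp hq =>
    have h : (p + q) - Zmap (p + q) = (p - Zmap p) + (q - Zmap q) := by
      rw [map_add]; ring
    rw [h]; exact dvd_add hp hq
  | mul_X p i hp =>
    fin_cases i
    · show (X 0 : MvP2) ∣ p * X 0 - Zmap (p * X 0)
      have h : Zmap (p * X 0) = 0 := by
        rw [map_mul, show Zmap (X 0) = 0 by simp [Zmap], mul_zero]
      rw [h, sub_zero]
      exact dvd_mul_left (X 0) p
    · show (X 0 : MvP2) ∣ p * X 1 - Zmap (p * X 1)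
      have h : Zmap (p * X 1) = Zmap p * X 1 := by
        rw [map_mul, show Zmap (X 1) = X 1 by simp [Zmap]]
      rw [h, show p * X 1 - Zmap p * X 1 = (p - Zmap p) * X 1 by ring]
      exact hp.mul_right (X 1)

lemma X0_dvd {G : MvP2} (h : ∀ v : ℝ, eval ![0, v] G = 0) : (X 0 : MvP2) ∣ G := by
  have hZ : Zmap G = 0 := by
    apply MvPolynomial.funext
    intro x
    rw [show Zmap G = aeval ![0, X 1] G from rfl, eval_aeval']
    have hf : (fun i => eval x ((![0, X 1] : Fin 2 → MvP2) i)) = ![0, x 1] := by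
      funext i; fin_cases i <;> simp
    rw [hf, h (x 1)]
    simp
  have := X0_dvd_sub G
  rwa [hZ, sub_zero] at this

lemma form_dvd_of_vanish {a b c : ℝ} (h : a ^ 2 + b ^ 2 = 1) {F : MvP2}
    (hv : ∀ q ∈ lineSet a b c, pev F q = 0) : form a b c ∣ F := by
  have h0 : ∀ v : ℝ, eval ![0, v] (tau a b c F) = 0 := by
    intro v
    rw [show tau a b c F =
        aeval ![C a * X 0 - C b * X 1 - C (a * c), C b * X 0 + C a * X 1 - C (b * c)] F from rfl,
      eval_aeval']
    have hf : (fun i => eval ![(0 : ℝ), v]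
        ((![C a * X 0 - C b * X 1 - C (a * c), C b * X 0 + C a * X 1 - C (b * c)] :
          Fin 2 → MvP2) i)) = ![-(b * v) - a * c, a * v - b * c] := by
      funext i; fin_cases i <;> simp
    rw [hf]
    have hq : ((-(b * v) - a * c, a * v - b * c) : ℝ × ℝ) ∈ lineSet a b c := by
      rw [mem_lineSet]; simp only []; linear_combination (-c) * h
    have := hv _ hq
    simpa [pev] using this
  obtain ⟨H, hH⟩ := X0_dvd h0
  refine ⟨sig a b c H, ?_⟩
  have hF : sig a b c (tau a b c F) = F := by
    have := sig_comp_tau (a := a) (b := b) (c := c) h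
    exact DFunLike.congr_fun this F
  calc F = sig a b c (tau a b c F) := hF.symm
    _ = sig a b c (X 0 * H) := by rw [← hH]
    _ = form a b c * sig a b c H := by rw [map_mul, sig_X0]

lemma pev_mul (F G : MvP2) (q : ℝ × ℝ) : pev (F * G) q = pev F q * pev G q := by
  simp [pev]

lemma vanish_of_form_dvd {a b c : ℝ} {F : MvP2} (hd : form a b c ∣ F) :
    ∀ q ∈ lineSet a b c, pev F q = 0 := by
  obtain ⟨H, rfl⟩ := hd
  intro q hq
  rw [pev_mul, pev_form]
  rw [mem_lineSet] at hq
  rw [hq, zero_mul]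

lemma prime_X0 : Prime (X 0 : MvP2) := by
  rw [← MulEquiv.prime_iff (MvPolynomial.finSuccEquiv ℝ 1).toRingEquiv.toMulEquiv]
  have : (MvPolynomial.finSuccEquiv ℝ 1) (X 0) = Polynomial.X := finSuccEquiv_X_zero
  rw [show (MvPolynomial.finSuccEquiv ℝ 1).toRingEquiv.toMulEquiv (X 0) =
    (MvPolynomial.finSuccEquiv ℝ 1) (X 0) from rfl, this]
  exact Polynomial.prime_X

lemma prime_form {a b c : ℝ} (h : a ^ 2 + b ^ 2 = 1) : Prime (form a b c) := by
  have hp := prime_X0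
  rw [← MulEquiv.prime_iff (lineEquiv a b c h).toRingEquiv.toMulEquiv] at hp
  have : (lineEquiv a b c h).toRingEquiv.toMulEquiv (X 0) = form a b c := by
    show lineEquiv a b c h (X 0) = form a b c
    rw [lineEquiv_apply, sig_X0]
  rwa [this] at hp

lemma lineSet_eq_of_associated {a b c a' b' c' : ℝ}
    (h : Associated (form a b c) (form a' b' c')) :
    lineSet a b c = lineSet a' b' c' := by
  obtain ⟨u, hu⟩ := h
  ext q
  rw [mem_lineSet, mem_lineSet]
  have h1 : pev (form a' b' c') q = pev (form a b c) q * pev (u : MvP2) q := by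
    rw [← hu, pev_mul]
  have h2 : pev (u : MvP2) q ≠ 0 := by
    have : IsUnit (MvPolynomial.eval ![q.1, q.2] (u : MvP2)) :=
      (Units.isUnit u).map (MvPolynomial.eval ![q.1, q.2])
    exact this.ne_zero
  constructor
  · intro hz
    have : pev (form a b c) q = 0 := by rw [pev_form]; linarith [hz]
    have := h1.trans (by rw [this, zero_mul])
    rw [pev_form] at this
    linarith [this]
  · intro hz
    have h3 : pev (form a' b' c') q = 0 := by rw [pev_form]; linarith [hz]
    rw [h1] at h3
    rcases mul_eq_zero.mp h3 with h4 | h4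
    · rw [pev_form] at h4; linarith [h4]
    · exact absurd h4 h2

lemma tdeg_aeval_le (g : Fin 2 → MvP2) (hg : ∀ i, (g i).totalDegree ≤ 1) (p : MvP2) :
    (aeval g p).totalDegree ≤ p.totalDegree := by
  conv_lhs => rw [p.as_sum]
  rw [map_sum]
  refine (totalDegree_finset_sum _ _).trans ?_
  apply Finset.sup_le
  intro d hd
  rw [aeval_monomial]
  refine (totalDegree_mul _ _).trans ?_
  have h1 : (algebraMap ℝ MvP2 (coeff d p)).totalDegree = 0 := by
    rw [MvPolynomial.algebraMap_eq]; exact totalDegree_C _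
  rw [h1, zero_add]
  refine (totalDegree_finset_prod _ _).trans ?_
  refine le_trans ?_ (le_totalDegree hd)
  have h2 : ∀ i ∈ d.support, (g i ^ d i).totalDegree ≤ d i := by
    intro i _
    refine (totalDegree_pow _ _).trans ?_
    calc d i * (g i).totalDegree ≤ d i * 1 := Nat.mul_le_mul_left _ (hg i)
      _ = d i := mul_one _
  refine (Finset.sum_le_sum h2).trans ?_
  rw [Finsupp.sum]

lemma tdeg_affine (a b c : ℝ) : (C a * X 0 + C b * X 1 + C c : MvP2).totalDegree ≤ 1 := by
  refine (totalDegree_add _ _).trans (max_le ((totalDegree_add _ _).trans (max_le ?_ ?_)) ?_)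
  · refine (totalDegree_mul _ _).trans ?_
    simp [totalDegree_C, totalDegree_X]
  · refine (totalDegree_mul _ _).trans ?_
    simp [totalDegree_C, totalDegree_X]
  · simp [totalDegree_C]

lemma tdeg_sig_le (a b c : ℝ) (p : MvP2) : (sig a b c p).totalDegree ≤ p.totalDegree := by
  apply tdeg_aeval_le
  intro i
  fin_cases i
  · exact tdeg_affine a b c
  · have : (C (-b) * X 0 + C a * X 1 : MvP2) = C (-b) * X 0 + C a * X 1 + C 0 := by
      rw [map_zero, add_zero]
    simpa [this] using tdeg_affine (-b) a 0

lemma tdeg_tau_le (a b c : ℝ) (p : MvP2) : (tau a b c p).totalDegree ≤ p.totalDegree := by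
  apply tdeg_aeval_le
  intro i
  fin_cases i
  · have : (C a * X 0 - C b * X 1 - C (a * c) : MvP2) =
        C a * X 0 + C (-b) * X 1 + C (-(a * c)) := by
      rw [map_neg, map_neg]; ring
    show (C a * X 0 - C b * X 1 - C (a * c) : MvP2).totalDegree ≤ 1
    rw [this]
    exact tdeg_affine a (-b) (-(a * c))
  · have : (C b * X 0 + C a * X 1 - C (b * c) : MvP2) =
        C b * X 0 + C a * X 1 + C (-(b * c)) := by
      rw [map_neg]; ring
    show (C b * X 0 + C a * X 1 - C (b * c) : MvP2).totalDegree ≤ 1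
    rw [this]
    exact tdeg_affine b a (-(b * c))

lemma tdeg_lineEquiv {a b c : ℝ} (h : a ^ 2 + b ^ 2 = 1) (p : MvP2) :
    (lineEquiv a b c h p).totalDegree = p.totalDegree := by
  refine le_antisymm (tdeg_sig_le a b c p) ?_
  have h1 : p = tau a b c (lineEquiv a b c h p) := by
    rw [lineEquiv_apply]
    have := DFunLike.congr_fun (tau_comp_sig (c := c) h) p
    rw [AlgHom.comp_apply, AlgHom.id_apply] at this
    exact this.symm
  conv_lhs => rw [h1]
  exact tdeg_tau_le a b c _

lemma tdeg_lineEquiv_symm {a b c : ℝ} (h : a ^ 2 + b ^ 2 = 1) (p : MvP2) :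
    ((lineEquiv a b c h).symm p).totalDegree = p.totalDegree := by
  have := tdeg_lineEquiv (c := c) h ((lineEquiv a b c h).symm p)
  rw [(lineEquiv a b c h).apply_symm_apply] at this
  exact this.symm

lemma tdeg_X0_mul (G : MvP2) (hG : G ≠ 0) :
    (X 0 * G).totalDegree = G.totalDegree + 1 := by
  apply le_antisymm
  · refine (totalDegree_mul _ _).trans ?_
    rw [totalDegree_X]
    omega
  · obtain ⟨s, hs, hsum⟩ := Finset.exists_mem_eq_sup G.support
      (by simpa using hG) (fun s => s.sum fun _ e => e)
    have hmem : Finsupp.single 0 1 + s ∈ (X 0 * G).support := by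
      rw [support_X_mul]
      exact Finset.mem_map_of_mem _ hs
    have hle := le_totalDegree hmem
    have hsum2 : (Finsupp.single (0 : Fin 2) 1 + s).sum (fun _ e => e) =
        1 + s.sum (fun _ e => e) := by
      rw [Finsupp.sum_add_index' (fun _ => rfl) (fun _ _ _ => rfl)]
      rw [Finsupp.sum_single_index rfl]
    rw [hsum2] at hle
    have : G.totalDegree = s.sum fun _ e => e := hsum
    omega

lemma tdeg_form_mul {a b c : ℝ} (h : a ^ 2 + b ^ 2 = 1) {G : MvP2} (hG : G ≠ 0) :
    (form a b c * G).totalDegree = G.totalDegree + 1 := by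
  set e := lineEquiv a b c h with he
  have h1 : form a b c * G = e (X 0 * e.symm G) := by
    rw [map_mul, e.apply_symm_apply]
    congr 1
    rw [he, lineEquiv_apply, sig_X0]
  have h2 : e.symm G ≠ 0 := by
    intro hzero
    apply hG
    have := congrArg e hzero
    rwa [e.apply_symm_apply, map_zero] at this
  rw [h1, tdeg_lineEquiv, tdeg_X0_mul _ h2, tdeg_lineEquiv_symm]

lemma invLine_norm {P Q : MvP2} {L : Set (ℝ × ℝ)} (h : InvLine P Q L) :
    ∃ a b c : ℝ, a ^ 2 + b ^ 2 = 1 ∧ L = lineSet a b c ∧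
      (∀ q ∈ L, a * pev P q + b * pev Q q = 0) ∧ form a b c ∣ (C a * P + C b * Q) := by
  obtain ⟨a, b, c, hab, hL, hv⟩ := h
  have hpos := pos_of_ne hab
  set s := Real.sqrt (a ^ 2 + b ^ 2) with hs
  have hs0 : 0 < s := Real.sqrt_pos.mpr hpos
  have hs2 : s ^ 2 = a ^ 2 + b ^ 2 := Real.sq_sqrt hpos.le
  have hnorm : (a / s) ^ 2 + (b / s) ^ 2 = 1 := by
    field_simp
    linarith [hs2]
  have hL' : L = lineSet (a / s) (b / s) (c / s) := by
    have h2 : lineSet (1 / s * a) (1 / s * b) (1 / s * c) = lineSet a b c :=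
      lineSet_smul (one_div_ne_zero hs0.ne')
    rw [hL, ← h2]
    congr 1 <;> ring
  have hv' : ∀ q ∈ L, a / s * pev P q + b / s * pev Q q = 0 := by
    intro q hq
    have := hv q hq
    field_simp
    linarith [this]
  refine ⟨a / s, b / s, c / s, hnorm, hL', hv', ?_⟩
  apply form_dvd_of_vanish hnorm
  intro q hq
  rw [← hL'] at hq
  have hy := hv' q hq
  have : pev (C (a / s) * P + C (b / s) * Q) q = a / s * pev P q + b / s * pev Q q := by
    simp [pev]
  rw [this, hy]

lemma card_le_totalDegree (𝔖 : Finset (Set (ℝ × ℝ))) :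
    ∀ F : MvP2, F ≠ 0 →
      (∀ L ∈ 𝔖, ∃ a b c : ℝ, a ^ 2 + b ^ 2 = 1 ∧ L = lineSet a b c ∧ form a b c ∣ F) →
      𝔖.card ≤ F.totalDegree := by
  classical
  induction 𝔖 using Finset.induction_on with
  | empty => intro F hF _; simp
  | @insert L s hLs IH =>
    intro F hF hforms
    obtain ⟨a, b, c, hn, hLe, hdvd⟩ := hforms L (Finset.mem_insert_self L s)
    obtain ⟨F', rfl⟩ := hdvd
    have hF' : F' ≠ 0 := by
      intro h0; exact hF (by rw [h0, mul_zero])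
    have hrest : ∀ L' ∈ s, ∃ a' b' c' : ℝ, a' ^ 2 + b' ^ 2 = 1 ∧ L' = lineSet a' b' c' ∧
        form a' b' c' ∣ F' := by
      intro L' hL'
      obtain ⟨a', b', c', hn', hLe', hdvd'⟩ := hforms L' (Finset.mem_insert_of_mem hL')
      refine ⟨a', b', c', hn', hLe', ?_⟩
      rcases (prime_form hn').2.2 _ _ hdvd' with h1 | h1
      · exfalso
        have hass := (prime_form hn').associated_of_dvd (prime_form hn) h1
        have : L' = L := by rw [hLe', hLe, lineSet_eq_of_associated hass]
        rw [this] at hL'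
        exact hLs hL'
      · exact h1
    rw [Finset.card_insert_of_notMem hLs, tdeg_form_mul hn hF']
    exact Nat.add_le_add_right (IH F' hF' hrest) 1

lemma finite_lines_dvd {F : MvP2} (hF : F ≠ 0) :
    {M : Set (ℝ × ℝ) | ∃ a b c : ℝ, a ^ 2 + b ^ 2 = 1 ∧ M = lineSet a b c ∧
      form a b c ∣ F}.Finite := by
  by_contra hinf
  have hinf' : {M : Set (ℝ × ℝ) | ∃ a b c : ℝ, a ^ 2 + b ^ 2 = 1 ∧ M = lineSet a b c ∧
      form a b c ∣ F}.Infinite := hinf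
  obtain ⟨t, hsub, htfin, hcard⟩ := hinf'.exists_subset_ncard_eq (F.totalDegree + 1)
  have hle := card_le_totalDegree htfin.toFinset F hF (by
    intro L hL
    exact hsub (htfin.mem_toFinset.mp hL))
  rw [Set.ncard_eq_toFinset_card _ htfin] at hcard
  omega

lemma form_dvd_of_slice {a b c : ℝ} (h : a ^ 2 + b ^ 2 = 1) {W : MvP2}
    (hvan : ∀ v : ℝ, eval ![0, v] (tau a b c W) = 0) : form a b c ∣ W := by
  obtain ⟨H, hH⟩ := X0_dvd hvan
  refine ⟨sig a b c H, ?_⟩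
  have hF : sig a b c (tau a b c W) = W := by
    have := DFunLike.congr_fun (sig_comp_tau (c := c) h) W
    rw [AlgHom.comp_apply, AlgHom.id_apply] at this
    exact this
  calc W = sig a b c (tau a b c W) := hF.symm
    _ = sig a b c (X 0 * H) := by rw [← hH]
    _ = form a b c * sig a b c H := by rw [map_mul, sig_X0]

lemma pev_eq_eval_tau {a b c : ℝ} (h : a ^ 2 + b ^ 2 = 1) (W : MvP2) (q : ℝ × ℝ)
    (hq : q ∈ lineSet a b c) :
    pev W q = eval ![0, -b * q.1 + a * q.2] (tau a b c W) := by
  have hW : W = sig a b c (tau a b c W) := by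
    have := DFunLike.congr_fun (sig_comp_tau (c := c) h) W
    rw [AlgHom.comp_apply, AlgHom.id_apply] at this
    exact this.symm
  conv_lhs => rw [hW]
  rw [pev, show sig a b c (tau a b c W) =
    aeval ![C a * X 0 + C b * X 1 + C c, C (-b) * X 0 + C a * X 1] (tau a b c W) from rfl,
    eval_aeval']
  have hf : (fun i => eval ![q.1, q.2]
      ((![C a * X 0 + C b * X 1 + C c, C (-b) * X 0 + C a * X 1] : Fin 2 → MvP2) i)) =
      ![0, -b * q.1 + a * q.2] := by
    funext i
    fin_cases i
    · simp
      rw [mem_lineSet] at hq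
      linarith [hq]
    · simp
  rw [hf]

lemma finite_zeros_on_line {a b c : ℝ} (h : a ^ 2 + b ^ 2 = 1) {W : MvP2}
    (hW : ¬ form a b c ∣ W) :
    {q : ℝ × ℝ | q ∈ lineSet a b c ∧ pev W q = 0}.Finite := by
  set u : Polynomial ℝ := aeval ![(0 : Polynomial ℝ), Polynomial.X] (tau a b c W) with hu
  have heval : ∀ v : ℝ, u.eval v = eval ![0, v] (tau a b c W) := by
    intro v
    rw [hu, peval_aeval']
    have hf : (fun i => Polynomial.eval v
        ((![(0 : Polynomial ℝ), Polynomial.X] : Fin 2 → Polynomial ℝ) i)) = ![(0 : ℝ), v] := by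
      funext i; fin_cases i <;> simp
    rw [hf]
  have hu0 : u ≠ 0 := by
    intro h0
    exact hW (form_dvd_of_slice h (fun v => by rw [← heval v, h0, Polynomial.eval_zero]))
  have hsub : {q : ℝ × ℝ | q ∈ lineSet a b c ∧ pev W q = 0} ⊆
      (fun v : ℝ => ((-c * a - b * v, -c * b + a * v) : ℝ × ℝ)) '' {v | u.IsRoot v} := by
    rintro ⟨q1, q2⟩ ⟨hq1, hq2⟩
    refine ⟨-b * q1 + a * q2, ?_, ?_⟩
    · show u.eval _ = 0
      rw [heval, ← pev_eq_eval_tau h W (q1, q2) hq1]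
      exact hq2
    · have hqm := hq1
      rw [mem_lineSet] at hqm
      simp only [] at hqm
      show ((-c * a - b * (-b * q1 + a * q2), -c * b + a * (-b * q1 + a * q2)) : ℝ × ℝ) =
        (q1, q2)
      rw [Prod.mk.injEq]
      constructor
      · linear_combination (-a) * hqm + q1 * h
      · linear_combination (-b) * hqm + q2 * h
  exact ((Polynomial.finite_setOf_isRoot hu0).image _).subset hsub

lemma numThrough_le_card (A : Finset (Set (ℝ × ℝ))) (q : ℝ × ℝ) : numThrough A q ≤ A.card := by
  classical
  unfold numThrough
  apply Finset.card_filter_le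

lemma numThrough_le_mArr (A : Finset (Set (ℝ × ℝ))) (q : ℝ × ℝ) : numThrough A q ≤ mArr A := by
  apply le_csSup
  · refine ⟨A.card, ?_⟩
    rintro k ⟨q', rfl⟩
    exact numThrough_le_card A q'
  · exact ⟨q, rfl⟩

lemma par_card_le_pArr (A S : Finset (Set (ℝ × ℝ))) (hS : S ⊆ A)
    (hpar : ∀ L ∈ S, ∀ L' ∈ S, ParLines L L') : S.card ≤ pArr A := by
  apply le_csSup
  · refine ⟨A.card, ?_⟩
    rintro k ⟨S', hS', _, rfl⟩
    exact Finset.card_le_card hS'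
  · exact ⟨S, hS, hpar, rfl⟩

lemma no_kernel_direction (A : Finset (Set (ℝ × ℝ))) (d : ℕ) (hd0 : 0 < d)
    (hd2 : d < A.card - pArr A)
    (P Q : MvP2) (hdeg : max P.totalDegree Q.totalDegree = d)
    (hfix : ∀ L ∈ A, InvLine P Q L) :
    ∀ α β : ℝ, (α, β) ≠ (0, 0) → C α * P + C β * Q ≠ 0 := by
  classical
  rintro α β hαβ h0
  have hPQ : ¬(P = 0 ∧ Q = 0) := by
    rintro ⟨rfl, rfl⟩
    simp at hdeg
    omega
  obtain ⟨W, hW0, hWd, r, hr, hkey⟩ :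
      ∃ W : MvP2, W ≠ 0 ∧ W.totalDegree ≤ d ∧ ∃ r : ℝ, r ≠ 0 ∧
        ∀ α' β' : ℝ, C α' * P + C β' * Q = C ((α * β' - α' * β) * r) * W := by
    rcases eq_or_ne α 0 with rfl | hα
    · have hβ : β ≠ 0 := fun hb => hαβ (by rw [hb])
      have hQ : Q = 0 := by
        have h1 : (C β : MvP2) * Q = 0 := by
          have := h0; rwa [map_zero, zero_mul, zero_add] at this
        rcases mul_eq_zero.mp h1 with h | h
        · exact absurd (by simpa using h) hβ
        · exact h
      have hP : P ≠ 0 := fun h => hPQ ⟨h, hQ⟩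
      refine ⟨P, hP, ?_, -1 / β, by simp [hβ], ?_⟩
      · calc P.totalDegree ≤ max P.totalDegree Q.totalDegree := le_max_left _ _
          _ = d := hdeg
      · intro α' β'
        rw [hQ, mul_zero, add_zero]
        congr 1
        congr 1
        field_simp
        ring
    · have hQ0 : Q ≠ 0 := by
        intro hQ
        have h1 : (C α : MvP2) * P = 0 := by
          have := h0; rwa [hQ, mul_zero, add_zero] at this
        rcases mul_eq_zero.mp h1 with h | h
        · exact hα (by simpa using h)
        · exact hPQ ⟨h, hQ⟩
      refine ⟨Q, hQ0, ?_, 1 / α, by simp [hα], ?_⟩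
      · calc Q.totalDegree ≤ max P.totalDegree Q.totalDegree := le_max_right _ _
          _ = d := hdeg
      · intro α' β'
        apply mul_left_cancel₀ (show (C α : MvP2) ≠ 0 by simpa using hα)
        have hP : (C α : MvP2) * P = -(C β * Q) := eq_neg_of_add_eq_zero_left h0
        have hcoef : α * ((α * β' - α' * β) * (1 / α)) = α * β' - α' * β := by
          field_simp
        calc (C α : MvP2) * (C α' * P + C β' * Q)
            = C α' * (C α * P) + C α * C β' * Q := by ring
          _ = C α' * (-(C β * Q)) + C α * C β' * Q := by rw [hP]
          _ = C (α * β' - α' * β) * Q := by rw [map_sub, map_mul, map_mul]; ring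
          _ = C (α * ((α * β' - α' * β) * (1 / α))) * Q := by rw [hcoef]
          _ = C α * (C ((α * β' - α' * β) * (1 / α)) * Q) := by rw [map_mul, mul_assoc]
  have hsplit : (A.filter (fun L => ∃ γ : ℝ, L = lineSet α β γ)).card +
      (A.filter (fun L => ¬ ∃ γ : ℝ, L = lineSet α β γ)).card = A.card := by
    convert Finset.card_filter_add_card_filter_not
      (s := A) (p := fun L => ∃ γ : ℝ, L = lineSet α β γ) using 2
  have h1 : (A.filter (fun L => ∃ γ : ℝ, L = lineSet α β γ)).card ≤ pArr A := by
    apply par_card_le_pArr _ _ (Finset.filter_subset _ _)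
    intro L hL L' hL'
    obtain ⟨γ, rfl⟩ := (Finset.mem_filter.mp hL).2
    obtain ⟨γ', rfl⟩ := (Finset.mem_filter.mp hL').2
    unfold ParLines
    exact parLines_same_normal
  have h2 : (A.filter (fun L => ¬ ∃ γ : ℝ, L = lineSet α β γ)).card ≤ d := by
    refine le_trans (card_le_totalDegree _ W hW0 ?_) hWd
    intro L hL
    have hLA := Finset.mem_filter.mp hL
    obtain ⟨a', b', c', hn', hL', hv', hdvd'⟩ := invLine_norm (hfix L hLA.1)
    refine ⟨a', b', c', hn', hL', ?_⟩
    have hdet : α * b' - a' * β ≠ 0 := by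
      intro hdet0
      obtain ⟨t, ht, ha', hb'⟩ := prop_of_det_zero hαβ (norm_ne hn') hdet0
      apply hLA.2
      refine ⟨c' / t, ?_⟩
      rw [hL', ha', hb']
      have hsm := lineSet_smul (a := α) (b := β) (c := c' / t) ht
      rw [← hsm]
      congr 1
      field_simp
    rw [hkey a' b'] at hdvd'
    have hk : (α * b' - a' * β) * r ≠ 0 := mul_ne_zero hdet hr
    have hWw : W = C (((α * b' - a' * β) * r)⁻¹) * (C ((α * b' - a' * β) * r) * W) := by
      rw [← mul_assoc, ← map_mul, inv_mul_cancel₀ hk, map_one, one_mul]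
    rw [hWw]
    exact hdvd'.mul_left _
  omega


/-- **Theorem.** Let `A` be a line arrangement with `n` lines and
`ν_f(A) = min (n - m(A) + 1) (n - p(A))`. If `0 < d < ν_f(A)`, then every
polynomial vector field of degree exactly `d` fixing every line of `A` has only a
finite set of invariant lines, i.e. `D_d(A) = D_d^f(A)`. -/
theorem mid_degree_fixing_is_finite_type
    (A : Finset (Set (ℝ × ℝ))) (hA : ∀ L ∈ A, IsLine L) (d : ℕ)
    (hd0 : 0 < d) (hd : d < min (A.card - mArr A + 1) (A.card - pArr A))
    (P Q : MvPolynomial (Fin 2) ℝ)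
    (hdeg : max P.totalDegree Q.totalDegree = d)
    (hfix : ∀ L ∈ A, InvLine P Q L) :
    {M : Set (ℝ × ℝ) | InvLine P Q M}.Finite := by
  classical
  rw [lt_min_iff] at hd
  obtain ⟨hd1, hd2⟩ := hd
  by_contra hfin
  have hinf : {M : Set (ℝ × ℝ) | InvLine P Q M}.Infinite := hfin
  have hnz : ∀ α β : ℝ, (α, β) ≠ (0, 0) → C α * P + C β * Q ≠ 0 :=
    no_kernel_direction A d hd0 hd2 P Q hdeg hfix
  have hP0 : P ≠ 0 := by
    have := hnz 1 0 (by norm_num)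
    simpa using this
  have hQ0 : Q ≠ 0 := by
    have := hnz 0 1 (by norm_num)
    simpa using this
  -- lines dividing both P and Q form a finite set
  have hBfin : {M : Set (ℝ × ℝ) | ∃ a b c : ℝ, a ^ 2 + b ^ 2 = 1 ∧ M = lineSet a b c ∧
      form a b c ∣ P ∧ form a b c ∣ Q}.Finite := by
    apply (finite_lines_dvd hP0).subset
    rintro M ⟨a, b, c, hn, hM, h1, -⟩
    exact ⟨a, b, c, hn, hM, h1⟩
  obtain ⟨L1, hL1ℒ, hL1B⟩ := (hinf.diff hBfin).nonempty
  obtain ⟨a1, b1, c1, hn1, hL1, hv1, hdvd1⟩ := invLine_norm hL1ℒ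
  obtain ⟨W, hWnd, hWzero⟩ : ∃ W : MvP2, ¬ form a1 b1 c1 ∣ W ∧
      ∀ q : ℝ × ℝ, pev P q = 0 → pev Q q = 0 → pev W q = 0 := by
    by_cases hp : form a1 b1 c1 ∣ P
    · by_cases hq : form a1 b1 c1 ∣ Q
      · exact absurd ⟨a1, b1, c1, hn1, hL1, hp, hq⟩ hL1B
      · exact ⟨Q, hq, fun q _ h2 => h2⟩
    · exact ⟨P, hp, fun q h1 _ => h1⟩
  have hS0fin : {q : ℝ × ℝ | q ∈ lineSet a1 b1 c1 ∧ pev W q = 0}.Finite :=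
    finite_zeros_on_line hn1 hWnd
  have hF1 : C a1 * P + C b1 * Q ≠ 0 := hnz a1 b1 (norm_ne hn1)
  have hPar1fin : {M : Set (ℝ × ℝ) | InvLine P Q M ∧ ParLines M L1}.Finite := by
    apply (finite_lines_dvd hF1).subset
    rintro M ⟨hMI, hMpar⟩
    obtain ⟨a, b, c, hn, hM, hv, hdvd⟩ := invLine_norm hMI
    have hdet : a1 * b - a * b1 = 0 := by
      apply det_zero_of_parLines hn (norm_ne hn1)
      rw [← hM, ← hL1]
      exact hMpar
    obtain ⟨t, ht, ha, hb⟩ := prop_of_det_zero (norm_ne hn1) (norm_ne hn) hdet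
    subst ha; subst hb
    refine ⟨t * a1, t * b1, c, hn, hM, ?_⟩
    have hc2 : C (t * a1) * P + C (t * b1) * Q = C t * (C a1 * P + C b1 * Q) := by
      rw [map_mul, map_mul]; ring
    rw [hc2] at hdvd
    have h2 : C a1 * P + C b1 * Q = C t⁻¹ * (C t * (C a1 * P + C b1 * Q)) := by
      rw [← mul_assoc, ← map_mul, inv_mul_cancel₀ ht, map_one, one_mul]
    rw [h2]
    exact hdvd.mul_left _
  have hℒ'inf : ({M : Set (ℝ × ℝ) | InvLine P Q M} \
      {M : Set (ℝ × ℝ) | InvLine P Q M ∧ ParLines M L1}).Infinite := hinf.diff hPar1fin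
  have hmeet : ∀ M ∈ ({M : Set (ℝ × ℝ) | InvLine P Q M} \
      {M : Set (ℝ × ℝ) | InvLine P Q M ∧ ParLines M L1}),
      ∃ q : ℝ × ℝ, q ∈ M ∧ q ∈ lineSet a1 b1 c1 ∧ pev W q = 0 := by
    rintro M ⟨hMI, hMnpar⟩
    have hnpar : ¬ ParLines M L1 := fun h => hMnpar ⟨hMI, h⟩
    obtain ⟨a, b, c, hn, hM, hv, -⟩ := invLine_norm hMI
    have hdet : a1 * b - a * b1 ≠ 0 := by
      intro h0
      apply hnpar
      obtain ⟨t, ht, ha, hb⟩ := prop_of_det_zero (norm_ne hn1) (norm_ne hn) h0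
      rw [hM, hL1, ha, hb]
      have hc : c = t * (c / t) := by field_simp
      rw [hc, lineSet_smul ht]
      unfold ParLines
      exact parLines_same_normal
    obtain ⟨q, hq1, hq2⟩ := exists_mem_inter
      (a := a) (b := b) (c := c) (a' := a1) (b' := b1) (c' := c1)
      (fun h => hdet (by linarith))
    have hvq := hv q (by rw [hM]; exact hq1)
    have hv1q := hv1 q (by rw [hL1]; exact hq2)
    have hPq : pev P q = 0 := by
      have hdq : (a1 * b - a * b1) * pev P q = 0 := by
        linear_combination b * hv1q - b1 * hvq
      rcases mul_eq_zero.mp hdq with h | h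
      · exact absurd h hdet
      · exact h
    have hQq : pev Q q = 0 := by
      have hdq : (a1 * b - a * b1) * pev Q q = 0 := by
        linear_combination a1 * hvq - a * hv1q
      rcases mul_eq_zero.mp hdq with h | h
      · exact absurd h hdet
      · exact h
    exact ⟨q, by rw [hM]; exact hq1, hq2, hWzero q hPq hQq⟩
  obtain ⟨q₀, hq₀S, hq₀inf⟩ : ∃ q₀ ∈ {q : ℝ × ℝ | q ∈ lineSet a1 b1 c1 ∧ pev W q = 0},
      {M : Set (ℝ × ℝ) | (M ∈ ({M : Set (ℝ × ℝ) | InvLine P Q M} \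
        {M : Set (ℝ × ℝ) | InvLine P Q M ∧ ParLines M L1})) ∧ q₀ ∈ M}.Infinite := by
    by_contra hno
    push_neg at hno
    have hfin2 : (⋃ q ∈ {q : ℝ × ℝ | q ∈ lineSet a1 b1 c1 ∧ pev W q = 0},
        {M : Set (ℝ × ℝ) | (M ∈ ({M : Set (ℝ × ℝ) | InvLine P Q M} \
          {M : Set (ℝ × ℝ) | InvLine P Q M ∧ ParLines M L1})) ∧ q ∈ M}).Finite :=
      Set.Finite.biUnion hS0fin (fun q hq => hno q hq)
    apply hℒ'inf
    apply hfin2.subset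
    intro M hM
    obtain ⟨q, hqM, hq1, hq2⟩ := hmeet M hM
    exact Set.mem_biUnion ⟨hq1, hq2⟩ ⟨hM, hqM⟩
  have hK0 : (X 1 - C q₀.2) * P - (X 0 - C q₀.1) * Q = 0 := by
    by_contra hKne
    apply hq₀inf
    apply (finite_lines_dvd hKne).subset
    rintro M ⟨⟨hMI, -⟩, hq₀M⟩
    obtain ⟨a, b, c, hn, hM, hv, -⟩ := invLine_norm hMI
    refine ⟨a, b, c, hn, hM, form_dvd_of_vanish hn ?_⟩
    intro q hq
    have hvq := hv q (by rw [hM]; exact hq)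
    have hq₀' : a * q₀.1 + b * q₀.2 + c = 0 := by rw [hM, mem_lineSet] at hq₀M; exact hq₀M
    have hqm : a * q.1 + b * q.2 + c = 0 := hq
    have hpevK : pev ((X 1 - C q₀.2) * P - (X 0 - C q₀.1) * Q) q =
        (q.2 - q₀.2) * pev P q - (q.1 - q₀.1) * pev Q q := by
      simp [pev]
    have hAq : a * pev ((X 1 - C q₀.2) * P - (X 0 - C q₀.1) * Q) q = 0 := by
      rw [hpevK]
      linear_combination (q.2 - q₀.2) * hvq + pev Q q * hq₀' - pev Q q * hqm
    have hBq : b * pev ((X 1 - C q₀.2) * P - (X 0 - C q₀.1) * Q) q = 0 := by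
      rw [hpevK]
      linear_combination (-(q.1 - q₀.1)) * hvq - pev P q * hq₀' + pev P q * hqm
    have hab := norm_ne hn
    rcases eq_or_ne a 0 with rfl | ha
    · have hb : b ≠ 0 := fun h => hab (by rw [h])
      rcases mul_eq_zero.mp hBq with h | h
      · exact absurd h hb
      · exact h
    · rcases mul_eq_zero.mp hAq with h | h
      · exact absurd h ha
      · exact h
  have hfac : (X 1 - C q₀.2) * P = (X 0 - C q₀.1) * Q := sub_eq_zero.mp hK0
  have hn10 : (1 : ℝ) ^ 2 + 0 ^ 2 = 1 := by norm_num
  have hn01 : (0 : ℝ) ^ 2 + 1 ^ 2 = 1 := by norm_num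
  have hfX : form 1 0 (-q₀.1) = X 0 - C q₀.1 := by
    rw [form, map_one, map_zero, map_neg]; ring
  have hfY : form 0 1 (-q₀.2) = X 1 - C q₀.2 := by
    rw [form, map_one, map_zero, map_neg]; ring
  have hdvdP : form 1 0 (-q₀.1) ∣ P := by
    have hdvd : form 1 0 (-q₀.1) ∣ (X 1 - C q₀.2) * P := by
      rw [hfac, hfX]
      exact dvd_mul_right _ _
    rcases (prime_form hn10).2.2 _ _ hdvd with h | h
    · exfalso
      have hass := (prime_form hn10).associated_of_dvd (prime_form hn01) (by rw [hfY]; exact h)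
      have heq := lineSet_eq_of_associated hass
      have hmem : ((q₀.1, q₀.2 + 1) : ℝ × ℝ) ∈ lineSet 1 0 (-q₀.1) := by
        rw [mem_lineSet]; simp only []; ring
      rw [heq, mem_lineSet] at hmem
      simp at hmem
    · exact h
  obtain ⟨T, hT⟩ := hdvdP
  have hQT : Q = form 0 1 (-q₀.2) * T := by
    apply mul_left_cancel₀ (prime_form hn10).ne_zero
    calc form 1 0 (-q₀.1) * Q = (X 0 - C q₀.1) * Q := by rw [hfX]
      _ = (X 1 - C q₀.2) * P := hfac.symm
      _ = (X 1 - C q₀.2) * (form 1 0 (-q₀.1) * T) := by rw [← hT]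
      _ = form 1 0 (-q₀.1) * (form 0 1 (-q₀.2) * T) := by rw [hfY]; ring
  have hT0 : T ≠ 0 := by
    intro h0
    exact hP0 (by rw [hT, h0, mul_zero])
  have hdT : T.totalDegree + 1 = d := by
    have hdP : P.totalDegree = T.totalDegree + 1 := by
      rw [hT]; exact tdeg_form_mul hn10 hT0
    have hdQ : Q.totalDegree = T.totalDegree + 1 := by
      rw [hQT]; exact tdeg_form_mul hn01 hT0
    rw [← hdeg, hdP, hdQ, max_self]
  have hsplit : (A.filter (fun L => q₀ ∈ L)).card +
      (A.filter (fun L => ¬ q₀ ∈ L)).card = A.card := by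
    convert Finset.card_filter_add_card_filter_not
      (s := A) (p := fun L => q₀ ∈ L) using 2
  have hA1 : (A.filter (fun L => q₀ ∈ L)).card ≤ mArr A := by
    have h := numThrough_le_mArr A q₀
    have heq : numThrough A q₀ = (A.filter (fun L => q₀ ∈ L)).card := by
      unfold numThrough
      congr
    omega
  have hA2 : (A.filter (fun L => ¬ q₀ ∈ L)).card ≤ T.totalDegree := by
    apply card_le_totalDegree _ T hT0
    intro L hL
    have hLA := Finset.mem_filter.mp hL
    obtain ⟨a, b, c, hn, hM, hv, hdvd⟩ := invLine_norm (hfix L hLA.1)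
    refine ⟨a, b, c, hn, hM, ?_⟩
    have hcomb : C a * P + C b * Q = form a b (-(a * q₀.1 + b * q₀.2)) * T := by
      rw [hT, hQT, hfX, hfY, form, map_neg, map_add, map_mul, map_mul]
      ring
    rw [hcomb] at hdvd
    rcases (prime_form hn).2.2 _ _ hdvd with h | h
    · exfalso
      have hass := (prime_form hn).associated_of_dvd (prime_form hn) h
      have heq := lineSet_eq_of_associated hass
      apply hLA.2
      rw [hM, heq, mem_lineSet]
      ring
    · exact h
  omega
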